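/- For all rational numbers a, b, t, u, v, if u^2 = (a^3 + b^3) t^2 - b^3 + a^3 and v^2 = (a^3 + b^3) t^2 + b^3 - a^3, then (2at)^6 - (2bt)^6 = (2tu)^4 - (2tv)^4. -/
import Mathlib

theorem quartic_from_squares (a b t u v : ℚ)
    (hu : u ^ 2 = (a ^ 3 + b ^ 3) * t ^ 2 - b ^ 3 + a ^ 3)
    (hv : v ^ 2 = (a ^ 3 + b ^ 3) * t ^ 2 + b ^ 3 - a ^ 3) :
    (2 * a * t) ^ 6 - (2 * b * t) ^ 6 = (2 * t * u) ^ 4 - (2 * t * v) ^ 4 := by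
  have h : (2*t*u)^4 = 16*t^4*(u^2)^2 := by ring
  have h2 : (2*t*v)^4 = 16*t^4*(v^2)^2 := by ring
  rw [h, h2, hu, hv]; ring
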